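/- For every finite n ≥ 2, the disjoint union B_n of n copies of (ℚ, <), i.e., Fin n × ℚ ordered by (i, q) ≤ (j, r) iff i = j and q ≤ r, is not MĒ-homogeneous: there exists an injective <-preserving map between finite subsets of B_n which has no extension to a surjective ≤-preserving map B_n → B_n. -/
import Mathlib


/-- The order on the disjoint union `Fin n × ℚ` of `n` copies of `ℚ`:
`(i, q) ≤ (j, r)` iff `i = j` and `q ≤ r`. -/
def Dle {n : ℕ} (x y : Fin n × ℚ) : Prop := x.1 = y.1 ∧ x.2 ≤ y.2

/-- The strict order: `(i, q) < (j, r)` iff `i = j` and `q < r`. -/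
def Dlt {n : ℕ} (x y : Fin n × ℚ) : Prop := x.1 = y.1 ∧ x.2 < y.2

/-- For finite `n ≥ 2`, the disjoint union `B_n = Fin n × ℚ` of `n` copies of `(ℚ, <)`
is not MĒ-homogeneous: some injective `<`-preserving map between finite subsets
has no extension to a surjective ≤-preserving map `B_n → B_n`. -/
theorem Bn_not_MEbar (n : ℕ) (hn : 2 ≤ n) :
    ∃ (A : Finset (Fin n × ℚ)) (f : Fin n × ℚ → Fin n × ℚ), Set.InjOn f ↑A ∧
      (∀ a₁ ∈ A, ∀ a₂ ∈ A, Dlt a₁ a₂ → Dlt (f a₁) (f a₂)) ∧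
      ¬ ∃ g : Fin n × ℚ → Fin n × ℚ, Function.Surjective g ∧
          (∀ x y, Dle x y → Dle (g x) (g y)) ∧ ∀ a ∈ A, g a = f a := by

  have h2 : 0 < n := by omega
  have h2' : 1 < n := by omega
  set i0 : Fin n := ⟨0, h2⟩ with hi0
  set i1 : Fin n := ⟨1, h2'⟩ with hi1
  have h01 : i0 ≠ i1 := by simp [hi0, hi1, Fin.ext_iff]
  set p0 : Fin n × ℚ := (i0, 0) with hp0
  set p1 : Fin n × ℚ := (i1, 0) with hp1
  refine ⟨{p0, p1}, fun x => (i0, if x.1 = i0 then 0 else 1), ?_, ?_, ?_⟩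
  · intro x hx y hy hxy
    simp only [Finset.coe_insert, Finset.coe_singleton, Set.mem_insert_iff,
      Set.mem_singleton_iff] at hx hy
    rcases hx with rfl | rfl <;> rcases hy with rfl | rfl <;>
      simp_all [hp0, hp1, h01, Ne.symm h01]
  · intro a₁ h₁ a₂ h₂ hlt
    simp only [Finset.mem_insert, Finset.mem_singleton] at h₁ h₂
    obtain ⟨_, hlt2⟩ := hlt
    rcases h₁ with rfl | rfl <;> rcases h₂ with rfl | rfl <;>
      simp_all [hp0, hp1]
  · rintro ⟨g, hsurj, hmono, hext⟩
    have hcomp : ∀ (i : Fin n) (q r : ℚ), (g (i, q)).1 = (g (i, r)).1 := by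
      intro i q r
      rcases le_total q r with h | h
      · exact (hmono (i, q) (i, r) ⟨rfl, h⟩).1
      · exact ((hmono (i, r) (i, q) ⟨rfl, h⟩).1).symm
    set h : Fin n → Fin n := fun i => (g (i, 0)).1 with hh
    have hsurj' : Function.Surjective h := by
      intro j
      obtain ⟨x, hx⟩ := hsurj (j, 0)
      refine ⟨x.1, ?_⟩
      have : (g (x.1, 0)).1 = (g (x.1, x.2)).1 := hcomp _ _ _
      simp only [hh]
      rw [this, Prod.mk.eta, hx]
    have hinj : Function.Injective h := Finite.injective_iff_surjective.mpr hsurj'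
    have e0 : g p0 = (i0, 0) := by
      rw [hext p0 (by simp)]; simp [hp0]
    have e1 : g p1 = (i0, 1) := by
      rw [hext p1 (by simp [hp0, hp1])]; simp [hp1, Ne.symm h01]
    have : h i0 = h i1 := by
      simp only [hh]
      rw [show ((i0 : Fin n), (0:ℚ)) = p0 from rfl, e0,
        show ((i1 : Fin n), (0:ℚ)) = p1 from rfl, e1]
    exact h01 (hinj this)
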